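/- For a prime number p ≥ 3, the integers g(k) = 2pk + (k²)_p for k ∈ [0:p−1], where (k²)_p denotes the unique integer t ∈ [0:p−1] with k² ≡ t mod p, form a Golomb ruler: for all ordered pairs (k ≠ k') and (ℓ ≠ ℓ') of indices in [0:p−1] with (k,k') ≠ (ℓ,ℓ'), one has g(k) − g(k') ≠ g(ℓ) − g(ℓ'). -/
import Mathlib


/-- For a prime `p ≥ 3`, the integers `g k = 2pk + (k² mod p)`, `k ∈ [0 : p-1]`,
form a Golomb ruler. -/
theorem stmt3 (p : ℕ) (hp : p.Prime) (hp3 : 3 ≤ p)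
    (g : ℕ → ℤ) (hg : ∀ k, g k = 2 * p * k + (k ^ 2 % p)) :
    ∀ k k' l l' : ℕ, k < p → k' < p → l < p → l' < p →
      k ≠ k' → l ≠ l' → (k, k') ≠ (l, l') →
      g k - g k' ≠ g l - g l' := by
  intro k k' l l' hk hk' hl hl' hkk hll hne heq
  rw [hg, hg, hg, hg] at heq
  have hP3 : (3:ℤ) ≤ (p:ℤ) := by exact_mod_cast hp3
  have hPpos : (0:ℤ) < p := by linarith
  have hmod : ∀ a : ℤ, 0 ≤ a % p ∧ a % p < p :=
    fun a => ⟨Int.emod_nonneg a (by positivity), Int.emod_lt_of_pos a hPpos⟩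
  obtain ⟨h1, h2⟩ := hmod ((k:ℤ)^2)
  obtain ⟨h3, h4⟩ := hmod ((k':ℤ)^2)
  obtain ⟨h5, h6⟩ := hmod ((l:ℤ)^2)
  obtain ⟨h7, h8⟩ := hmod ((l':ℤ)^2)
  have hkZ : (k:ℤ) < p := by exact_mod_cast hk
  have hk'Z : (k':ℤ) < p := by exact_mod_cast hk'
  have hlZ : (l:ℤ) < p := by exact_mod_cast hl
  have hl'Z : (l':ℤ) < p := by exact_mod_cast hl'
  have hk0 : (0:ℤ) ≤ k := Int.natCast_nonneg k
  have hk'0 : (0:ℤ) ≤ k' := Int.natCast_nonneg k'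
  have hl0 : (0:ℤ) ≤ l := Int.natCast_nonneg l
  have hl'0 : (0:ℤ) ≤ l' := Int.natCast_nonneg l'
  set a : ℤ := (k:ℤ) - k' - ((l:ℤ) - l') with ha
  have key : 2*(p:ℤ)*a
      = ((l:ℤ)^2 % p - (l':ℤ)^2 % p) - ((k:ℤ)^2 % p - (k':ℤ)^2 % p) := by
    rw [ha]; push_cast at heq ⊢; linarith
  have ha0 : a = 0 := by
    rcases lt_trichotomy a 0 with h | h | h
    · exfalso
      have h1' : a ≤ -1 := by linarith
      have : 2*(p:ℤ)*a ≤ 2*(p:ℤ)*(-1) := by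
        apply mul_le_mul_of_nonneg_left h1' (by linarith)
      linarith
    · exact h
    · exfalso
      have h1' : (1:ℤ) ≤ a := by linarith
      have : 2*(p:ℤ)*1 ≤ 2*(p:ℤ)*a := by
        apply mul_le_mul_of_nonneg_left h1' (by linarith)
      linarith
  have hreq : (k:ℤ)^2 % p - (k':ℤ)^2 % p = (l:ℤ)^2 % p - (l':ℤ)^2 % p := by
    rw [ha0] at key; linarith
  have hdvd : ∀ b : ℤ, (p:ℤ) ∣ b - b % p := fun b =>
    ⟨b / p, by have := Int.mul_ediv_add_emod b p; linarith⟩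
  have hdd : (p:ℤ) ∣ ((k:ℤ)^2 - (k':ℤ)^2) - ((l:ℤ)^2 - (l':ℤ)^2) := by
    have h := dvd_sub (dvd_sub (hdvd ((k:ℤ)^2)) (hdvd ((k':ℤ)^2)))
      (dvd_sub (hdvd ((l:ℤ)^2)) (hdvd ((l':ℤ)^2)))
    have e : (((k:ℤ)^2 - (k:ℤ)^2 % p) - ((k':ℤ)^2 - (k':ℤ)^2 % p))
        - (((l:ℤ)^2 - (l:ℤ)^2 % p) - ((l':ℤ)^2 - (l':ℤ)^2 % p))
        = ((k:ℤ)^2 - (k':ℤ)^2) - ((l:ℤ)^2 - (l':ℤ)^2) := by linarith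
    rwa [e] at h
  have hl'eq : (l':ℤ) = (l:ℤ) - k + k' := by
    have := ha0; rw [ha] at this; linarith
  have hfac : ((k:ℤ)^2 - (k':ℤ)^2) - ((l:ℤ)^2 - (l':ℤ)^2)
      = ((k:ℤ) - k') * (2 * ((k:ℤ) - l)) := by
    rw [hl'eq]; ring
  rw [hfac] at hdd
  have hprime : Prime ((p:ℤ)) := Nat.prime_iff_prime_int.mp hp
  have hnd1 : ¬ (p:ℤ) ∣ ((k:ℤ) - k') := by
    intro h
    have hne0 : (k:ℤ) - k' ≠ 0 := by
      intro h0
      exact hkk (by exact_mod_cast (show (k:ℤ) = k' by linarith))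
    have hle := Int.le_of_dvd (abs_pos.mpr hne0) ((dvd_abs _ _).mpr h)
    have : |(k:ℤ) - k'| < p := by
      rw [abs_lt]; constructor <;> linarith
    linarith
  rcases hprime.dvd_mul.mp hdd with h | h
  · exact hnd1 h
  rcases hprime.dvd_mul.mp h with h | h
  · have := Int.le_of_dvd (by norm_num) h
    linarith
  have hkl : (k:ℤ) = l := by
    by_contra h0
    have hne0 : (k:ℤ) - l ≠ 0 := fun h1 => h0 (by linarith)
    have hle := Int.le_of_dvd (abs_pos.mpr hne0) ((dvd_abs _ _).mpr h)
    have : |(k:ℤ) - l| < p := by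
      rw [abs_lt]; constructor <;> linarith
    linarith
  have hkl' : (k':ℤ) = l' := by rw [hl'eq]; linarith
  exact hne (by
    have e1 : k = l := by exact_mod_cast hkl
    have e2 : k' = l' := by exact_mod_cast hkl'
    rw [e1, e2])
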